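/- For any p×p real matrix G, the matrix (b/a)·G + (m/a)·e₁e₁ᵀ is a generalized inverse of M (i.e. M·((b/a)·G + (m/a)·e₁e₁ᵀ)·M = M) if and only if G is a generalized inverse of M_Po (i.e. M_Po·G·M_Po = M_Po). -/

import Mathlib

open Matrix Real Finset

private lemma gie_mul_aux {p : ℕ} (A : Matrix (Fin p) (Fin p) ℝ) (s x y : ℝ)
    (hA : A * A = s • A) (h : y - x - x * y * s = 0) :
    (1 - x • A) * (1 + y • A) = 1 ∧ (1 + y • A) * (1 - x • A) = 1 := by
  constructor
  · have e : (1 - x • A) * (1 + y • A) = 1 + (y - x - x * y * s) • A := by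
      simp only [sub_mul, mul_add, one_mul, mul_one, smul_mul_assoc, mul_smul_comm, hA,
        smul_smul]
      module
    rw [e, h, zero_smul, add_zero]
  · have e : (1 + y • A) * (1 - x • A) = 1 + (y - x - x * y * s) • A := by
      simp only [add_mul, mul_sub, one_mul, mul_one, smul_mul_assoc, mul_smul_comm, hA,
        smul_smul]
      module
    rw [e, h, zero_smul, add_zero]

theorem generalized_inverse_equivalence
    (a b m : ℝ) (ha : 0 < a) (hb : 0 < b) (hm : 0 < m)
    (p : ℕ) (hp : 1 ≤ p)
    (e1 : Fin p → ℝ) (he1 : e1 = fun i : Fin p => if (i : ℕ) = 0 then (1:ℝ) else 0)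
    (MPo : Matrix (Fin p) (Fin p) ℝ) (hMPo : MPo.PosSemidef)
    (M : Matrix (Fin p) (Fin p) ℝ)
    (hM : M = (a / b) • (MPo -
      (e1 ⬝ᵥ (MPo *ᵥ e1) + b / m)⁻¹ •
        (MPo * Matrix.vecMulVec e1 e1 * MPo))) :
    ∀ G : Matrix (Fin p) (Fin p) ℝ,
      M * ((b / a) • G + (m / a) • Matrix.vecMulVec e1 e1) * M = M ↔
      MPo * G * MPo = MPo := by
  intro G
  set E : Matrix (Fin p) (Fin p) ℝ := Matrix.vecMulVec e1 e1 with hE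
  set s : ℝ := e1 ⬝ᵥ (MPo *ᵥ e1) with hs
  have hs0 : 0 ≤ s := by simpa using hMPo.dotProduct_mulVec_nonneg e1
  have hβ : (0:ℝ) < b / m := div_pos hb hm
  set c : ℝ := s + b / m with hc
  have hc0 : (0:ℝ) < c := by positivity
  have hcne : c ≠ 0 := ne_of_gt hc0
  have hβne : b / m ≠ 0 := ne_of_gt hβ
  have hab : a / b ≠ 0 := ne_of_gt (div_pos ha hb)
  have hba : b / a ≠ 0 := ne_of_gt (div_pos hb ha)
  -- E * MPo * E = s • E
  have hEME : E * MPo * E = s • E := by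
    ext i j
    simp [hE, hs, mul_apply, vecMulVec_apply, dotProduct, mulVec, Finset.sum_mul,
      Finset.mul_sum]
    rw [Finset.sum_comm]
    congr 1; ext k; congr 1; ext l; ring
  have hAA : (E * MPo) * (E * MPo) = s • (E * MPo) := by
    calc (E * MPo) * (E * MPo) = (E * MPo * E) * MPo := by
          simp only [Matrix.mul_assoc]
      _ = s • (E * MPo) := by rw [hEME, smul_mul_assoc]
  have hBB : (MPo * E) * (MPo * E) = s • (MPo * E) := by
    calc (MPo * E) * (MPo * E) = MPo * (E * MPo * E) := by
          simp only [Matrix.mul_assoc]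
      _ = s • (MPo * E) := by rw [hEME, mul_smul_comm]
  have hmne : m ≠ 0 := ne_of_gt hm
  have hcoef : (b / m)⁻¹ - c⁻¹ - c⁻¹ * (b / m)⁻¹ * s = 0 := by
    rw [hc]
    field_simp
    ring
  set T : Matrix (Fin p) (Fin p) ℝ := 1 - c⁻¹ • (E * MPo) with hT
  set T' : Matrix (Fin p) (Fin p) ℝ := 1 + (b / m)⁻¹ • (E * MPo) with hT'
  set S : Matrix (Fin p) (Fin p) ℝ := 1 - c⁻¹ • (MPo * E) with hS
  set S' : Matrix (Fin p) (Fin p) ℝ := 1 + (b / m)⁻¹ • (MPo * E) with hS'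
  obtain ⟨hTT', hT'T⟩ := gie_mul_aux (E * MPo) s c⁻¹ (b / m)⁻¹ hAA hcoef
  obtain ⟨hSS', hS'S⟩ := gie_mul_aux (MPo * E) s c⁻¹ (b / m)⁻¹ hBB hcoef
  set N : Matrix (Fin p) (Fin p) ℝ := MPo - c⁻¹ • (MPo * E * MPo) with hN
  have hSN : S * MPo = N := by
    rw [hS, hN, sub_mul, one_mul, smul_mul_assoc]
  have hNT : MPo * T = N := by
    rw [hT, hN, mul_sub, mul_one, mul_smul_comm, Matrix.mul_assoc]
  have hMeq : M = (a / b) • N := hM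
  set X : Matrix (Fin p) (Fin p) ℝ := (b / a) • G + (m / a) • E with hX
  -- Step A
  have lhs_eq : M * X * M = ((a / b) * (a / b)) • (N * X * N) := by
    rw [hMeq, smul_mul_assoc, smul_mul_assoc, mul_smul_comm, smul_smul]
  have rhs_eq : M = ((a / b) * (a / b)) • ((b / a) • N) := by
    rw [hMeq, smul_smul]
    congr 1
    field_simp
  have stepA : M * X * M = M ↔ N * X * N = (b / a) • N := by
    rw [lhs_eq]
    nth_rewrite 1 [rhs_eq]
    exact (smul_right_injective _ (mul_ne_zero hab hab)).eq_iff
  -- Step B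
  have lhs2 : N * X * N = S * (MPo * X * MPo) * T := by
    nth_rewrite 2 [← hNT]
    nth_rewrite 1 [← hSN]
    simp only [Matrix.mul_assoc]
  have rhs2 : (b / a) • N = S * ((b / a) • (MPo * T')) * T := by
    have e : S * (MPo * T') * T = N := by
      calc S * (MPo * T') * T = S * (MPo * (T' * T)) := by simp only [Matrix.mul_assoc]
        _ = N := by rw [hT'T, Matrix.mul_one, hSN]
    rw [mul_smul_comm, smul_mul_assoc, e]
  have stepB : N * X * N = (b / a) • N ↔ MPo * X * MPo = (b / a) • (MPo * T') := by
    rw [lhs2, rhs2]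
    constructor
    · intro h
      have h2 := congrArg (fun Z => S' * Z * T') h
      have e : ∀ P : Matrix (Fin p) (Fin p) ℝ, S' * (S * P * T) * T' = P := by
        intro P
        calc S' * (S * P * T) * T' = (S' * S) * (P * (T * T')) := by
              simp only [Matrix.mul_assoc]
          _ = P := by rw [hS'S, hTT', Matrix.one_mul, Matrix.mul_one]
      rwa [e, e] at h2
    · intro h; rw [h]
  -- Step C
  have lhs3 : MPo * X * MPo =
      (b / a) • (MPo * G * MPo) + (m / a) • (MPo * E * MPo) := by
    rw [hX, mul_add, add_mul, mul_smul_comm, mul_smul_comm, smul_mul_assoc, smul_mul_assoc]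
  have rhs3 : (b / a) • (MPo * T') =
      (b / a) • MPo + (m / a) • (MPo * E * MPo) := by
    rw [hT', mul_add, Matrix.mul_one, mul_smul_comm, smul_add, smul_smul, ← Matrix.mul_assoc]
    congr 2
    field_simp
  have stepC : MPo * X * MPo = (b / a) • (MPo * T') ↔ MPo * G * MPo = MPo := by
    rw [lhs3, rhs3, add_left_inj]
    exact (smul_right_injective _ hba).eq_iff
  rw [stepA, stepB, stepC]
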